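/- There exists exactly one stationary Nash equilibrium; that is, there is a unique vector p** = (p_H**, p_L**) with positive entries satisfying G_H(p**, p**) = 0 and G_L(p**, p**) = 0 (equivalently, p_i** = 1/((b_i + c_i)·(1 − d_i(p**, p**))) for both i ∈ {H, L}). -/

import Mathlib

open Real Filter

/-- Deterministic utility u_i(p_i, r_i) = a_i - b_i * p_i + c_i * (r_i - p_i). -/
noncomputable def util (a b c pi ri : ℝ) : ℝ := a - b * pi + c * (ri - pi)

/-- MNL demand of product H. -/
noncomputable def demH (aH aL bH bL cH cL : ℝ) (p r : ℝ × ℝ) : ℝ :=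
  Real.exp (util aH bH cH p.1 r.1) /
    (1 + Real.exp (util aH bH cH p.1 r.1) + Real.exp (util aL bL cL p.2 r.2))

/-- MNL demand of product L. -/
noncomputable def demL (aH aL bH bL cH cL : ℝ) (p r : ℝ × ℝ) : ℝ :=
  Real.exp (util aL bL cL p.2 r.2) /
    (1 + Real.exp (util aH bH cH p.1 r.1) + Real.exp (util aL bL cL p.2 r.2))

/-- Scaled derivative of the log-revenue of firm H. -/
noncomputable def GrH (aH aL bH bL cH cL : ℝ) (p r : ℝ × ℝ) : ℝ :=
  1 / ((bH + cH) * p.1) + demH aH aL bH bL cH cL p r - 1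

/-- Scaled derivative of the log-revenue of firm L. -/
noncomputable def GrL (aH aL bH bL cH cL : ℝ) (p r : ℝ × ℝ) : ℝ :=
  1 / ((bL + cL) * p.2) + demL aH aL bH bL cH cL p r - 1

/-- Stationary Nash equilibrium: positive price vector on which both scaled
derivatives vanish at price = reference price. -/
def IsSNE (aH aL bH bL cH cL : ℝ) (p : ℝ × ℝ) : Prop :=
  0 < p.1 ∧ 0 < p.2 ∧ GrH aH aL bH bL cH cL p p = 0 ∧ GrL aH aL bH bL cH cL p p = 0

/-- Projection onto the interval [lo, hi]. -/
noncomputable def proj (lo hi x : ℝ) : ℝ := min (max x lo) hi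

/-- Membership of a price vector in P² = [lo, hi]². -/
def InP2 (lo hi : ℝ) (x : ℝ × ℝ) : Prop := x.1 ∈ Set.Icc lo hi ∧ x.2 ∈ Set.Icc lo hi

/-- Squared Euclidean norm on ℝ². -/
noncomputable def norm2sq (x : ℝ × ℝ) : ℝ := x.1 ^ 2 + x.2 ^ 2

/-- The OPGA dynamics for price path `pp` and reference-price path `rr`. -/
def OPGA (aH aL bH bL cH cL lo hi alpha : ℝ) (eta : ℕ → ℝ) (pp rr : ℕ → ℝ × ℝ) : Prop :=
  (∀ t, (pp (t+1)).1 =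
      proj lo hi ((pp t).1 + eta t * (bH + cH) * GrH aH aL bH bL cH cL (pp t) (rr t))) ∧
  (∀ t, (pp (t+1)).2 =
      proj lo hi ((pp t).2 + eta t * (bL + cL) * GrL aH aL bH bL cH cL (pp t) (rr t))) ∧
  (∀ t, (rr (t+1)).1 = alpha * (rr t).1 + (1 - alpha) * (pp t).1) ∧
  (∀ t, (rr (t+1)).2 = alpha * (rr t).2 + (1 - alpha) * (pp t).2)

/-- The weighted ℓ¹ distance to the SNE. -/
noncomputable def wdist (bH bL cH cL : ℝ) (pstar p : ℝ × ℝ) : ℝ :=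
  |pstar.1 - p.1| / (bH + cH) + |pstar.2 - p.2| / (bL + cL)

/-- The function 𝒢(p) = sign(p_H** − p_H)·G_H(p,p) + sign(p_L** − p_L)·G_L(p,p). -/
noncomputable def calG (aH aL bH bL cH cL : ℝ) (pstar p : ℝ × ℝ) : ℝ :=
  Real.sign (pstar.1 - p.1) * GrH aH aL bH bL cH cL p p +
  Real.sign (pstar.2 - p.2) * GrL aH aL bH bL cH cL p p

/-- The function ℋ(p) used in the local analysis around the SNE. -/
noncomputable def calH (aH aL bH bL cH cL : ℝ) (pstar p : ℝ × ℝ) : ℝ :=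
  (bH + cH) * GrH aH aL bH bL cH cL p p * (pstar.1 - p.1) +
  (bL + cL) * GrL aH aL bH bL cH cL p p * (pstar.2 - p.2)

/-- The constant M_G bounding |G_i| on P². -/
noncomputable def MG (bH bL cH cL lo : ℝ) : ℝ :=
  max (1 / ((bH + cH) * lo)) (1 / ((bL + cL) * lo)) + 1

/-- The Lipschitz constant l_r = (1/4)·√(c_H² + c_L²). -/
noncomputable def lr (cH cL : ℝ) : ℝ := (1 / 4) * Real.sqrt (cH ^ 2 + cL ^ 2)

/-! ### Auxiliary machinery for the SNE uniqueness theorem -/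

/-- `auxf γ t = γ t + log (1 - 1/t)`, strictly increasing on `(1, ∞)`. -/
noncomputable def auxf (γ t : ℝ) : ℝ := γ * t + Real.log (1 - 1 / t)

lemma auxf_strictMonoOn {γ : ℝ} (hγ : 0 < γ) : StrictMonoOn (auxf γ) (Set.Ioi 1) := by
  intro s hs t ht hst
  simp only [Set.mem_Ioi] at hs ht
  have hs0 : (0:ℝ) < s := by linarith
  have ht0 : (0:ℝ) < t := by linarith
  have h1 : (0:ℝ) < 1 - 1 / s := by
    rw [sub_pos, div_lt_one hs0]; exact hs
  have h2 : 1 - 1 / s < 1 - 1 / t := by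
    have : 1 / t < 1 / s := one_div_lt_one_div_of_lt hs0 hst
    linarith
  have hlog := Real.log_lt_log h1 h2
  have hmul : γ * s < γ * t := mul_lt_mul_of_pos_left hst hγ
  unfold auxf; linarith

lemma auxf_exists {γ : ℝ} (hγ : 0 < γ) (y : ℝ) : ∃ t, 1 < t ∧ auxf γ t = y := by
  set ε := min 1 (Real.exp (y - 2 * γ)) with hεdef
  have hε0 : 0 < ε := lt_min one_pos (Real.exp_pos _)
  have hε1 : ε ≤ 1 := min_le_left _ _
  set t0 : ℝ := 1 + ε with ht0def
  set t1 : ℝ := max 2 ((y + 1) / γ) with ht1def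
  have ht0gt : 1 < t0 := by simp only [ht0def]; linarith
  have ht0le2 : t0 ≤ 2 := by simp only [ht0def]; linarith
  have ht1ge2 : (2:ℝ) ≤ t1 := le_max_left _ _
  have ht01 : t0 ≤ t1 := le_trans ht0le2 ht1ge2
  -- f t0 ≤ y
  have hft0 : auxf γ t0 ≤ y := by
    have h1 : 1 - 1 / t0 = ε / (1 + ε) := by
      rw [ht0def]; field_simp; ring
    have h2 : Real.log (ε / (1 + ε)) = Real.log ε - Real.log (1 + ε) :=
      Real.log_div (ne_of_gt hε0) (by positivity)
    have h3 : Real.log ε ≤ y - 2 * γ := by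
      calc Real.log ε ≤ Real.log (Real.exp (y - 2 * γ)) :=
            Real.log_le_log hε0 (min_le_right _ _)
        _ = y - 2 * γ := Real.log_exp _
    have h4 : (0:ℝ) ≤ Real.log (1 + ε) := Real.log_nonneg (by linarith)
    have h5 : γ * t0 ≤ 2 * γ := by rw [ht0def]; nlinarith
    unfold auxf
    rw [h1, h2]; linarith
  -- f t1 ≥ y
  have hft1 : y ≤ auxf γ t1 := by
    have h1 : (1:ℝ)/2 ≤ 1 - 1 / t1 := by
      have : 1 / t1 ≤ 1 / 2 := by
        apply one_div_le_one_div_of_le (by norm_num) ht1ge2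
      linarith
    have h2 : Real.log (1/2) ≤ Real.log (1 - 1 / t1) :=
      Real.log_le_log (by norm_num) h1
    have h3 : Real.log (1/2) = - Real.log 2 := by
      rw [one_div, Real.log_inv]
    have h4 : Real.log 2 ≤ 1 := by
      have := Real.log_le_sub_one_of_pos (x := 2) (by norm_num)
      linarith
    have h5 : y + 1 ≤ γ * t1 := by
      have : (y + 1) / γ ≤ t1 := le_max_right _ _
      calc y + 1 = γ * ((y + 1) / γ) := by field_simp
        _ ≤ γ * t1 := mul_le_mul_of_nonneg_left this (le_of_lt hγ)
    unfold auxf; linarith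
  -- IVT
  have hsub : Set.Icc t0 t1 ⊆ Set.Ioi (1:ℝ) := fun x hx => lt_of_lt_of_le ht0gt hx.1
  have hcont : ContinuousOn (auxf γ) (Set.Icc t0 t1) := by
    apply ContinuousOn.add
    · exact (continuousOn_const.mul continuousOn_id)
    · apply ContinuousOn.log
      · apply ContinuousOn.sub continuousOn_const
        apply ContinuousOn.div continuousOn_const continuousOn_id
        intro x hx; have := hsub hx; simp only [Set.mem_Ioi] at this
        simp only [id_eq]; exact ne_of_gt (by linarith)
      · intro x hx
        have hx1 : 1 < x := hsub hx
        have : (0:ℝ) < 1 - 1/x := by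
          rw [sub_pos, div_lt_one (by linarith)]; exact hx1
        exact ne_of_gt this
  have hy : y ∈ Set.Icc (auxf γ t0) (auxf γ t1) := ⟨hft0, hft1⟩
  obtain ⟨t, ht, hft⟩ := intermediate_value_Icc ht01 hcont hy
  exact ⟨t, lt_of_lt_of_le ht0gt ht.1, hft⟩

/-- The inverse of `auxf γ` on `(1, ∞)`. -/
noncomputable def auxφ (γ : ℝ) (y : ℝ) : ℝ :=
  if h : 0 < γ then (auxf_exists h y).choose else 2

lemma auxφ_gt {γ : ℝ} (hγ : 0 < γ) (y : ℝ) : 1 < auxφ γ y := by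
  rw [auxφ, dif_pos hγ]; exact (auxf_exists hγ y).choose_spec.1

lemma auxf_auxφ {γ : ℝ} (hγ : 0 < γ) (y : ℝ) : auxf γ (auxφ γ y) = y := by
  rw [auxφ, dif_pos hγ]; exact (auxf_exists hγ y).choose_spec.2

lemma auxφ_eq {γ t y : ℝ} (hγ : 0 < γ) (ht : 1 < t) (hft : auxf γ t = y) :
    auxφ γ y = t := by
  apply (auxf_strictMonoOn hγ).injOn (Set.mem_Ioi.mpr (auxφ_gt hγ y)) (Set.mem_Ioi.mpr ht)
  rw [auxf_auxφ hγ, hft]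

lemma auxφ_strictMono {γ : ℝ} (hγ : 0 < γ) : StrictMono (auxφ γ) := by
  intro y y' hyy'
  rcases lt_trichotomy (auxφ γ y) (auxφ γ y') with h | h | h
  · exact h
  · exfalso
    have h1 := auxf_auxφ hγ y
    have h2 := auxf_auxφ hγ y'
    rw [h, h2] at h1
    linarith
  · exfalso
    have h1 := auxf_strictMonoOn hγ (Set.mem_Ioi.mpr (auxφ_gt hγ y'))
      (Set.mem_Ioi.mpr (auxφ_gt hγ y)) h
    rw [auxf_auxφ hγ, auxf_auxφ hγ] at h1
    linarith

lemma auxφ_continuous {γ : ℝ} (hγ : 0 < γ) : Continuous (auxφ γ) := by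
  rw [continuous_iff_continuousAt]
  intro y
  apply StrictMonoOn.continuousAt_of_image_mem_nhds
    (s := Set.univ) ((auxφ_strictMono hγ).strictMonoOn _) Filter.univ_mem
  rw [Set.image_univ]
  have hsub : Set.Ioi (1:ℝ) ⊆ Set.range (auxφ γ) := by
    intro t ht
    exact ⟨auxf γ t, auxφ_eq hγ (Set.mem_Ioi.mp ht) rfl⟩
  exact Filter.mem_of_superset (Ioi_mem_nhds (auxφ_gt hγ y)) hsub

lemma auxφ_le {γ ε y : ℝ} (hγ : 0 < γ) (hε0 : 0 < ε) (hε1 : ε ≤ 1)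
    (hy : y ≤ γ - 1 + Real.log ε) : auxφ γ y ≤ 1 + ε := by
  by_contra hcon
  push_neg at hcon
  set φ := auxφ γ y with hφdef
  have hφ1 : 1 < φ := auxφ_gt hγ y
  have hφ0 : 0 < φ := by linarith
  have hfeq : γ * φ + Real.log (1 - 1 / φ) = y := auxf_auxφ hγ y
  have hlog2 : Real.log 2 ≤ 1 := by
    have := Real.log_le_sub_one_of_pos (x := 2) (by norm_num); linarith
  rcases le_or_gt φ 2 with h2 | h2
  · -- 1 < φ ≤ 2, φ > 1 + ε
    have hnum : ε / 2 ≤ 1 - 1 / φ := by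
      have heq : 1 - 1/φ = (φ - 1)/φ := by field_simp
      rw [heq, div_le_div_iff₀ (by norm_num) hφ0]
      nlinarith
    have hl : Real.log (ε / 2) ≤ Real.log (1 - 1 / φ) :=
      Real.log_le_log (by positivity) hnum
    have hl2 : Real.log (ε / 2) = Real.log ε - Real.log 2 :=
      Real.log_div (ne_of_gt hε0) (by norm_num)
    have hγφ : γ < γ * φ := by nlinarith
    linarith
  · -- φ > 2
    have hnum : (1:ℝ)/2 ≤ 1 - 1 / φ := by
      have : 1 / φ ≤ 1 / 2 := one_div_le_one_div_of_le (by norm_num) (le_of_lt h2)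
      linarith
    have hl : Real.log (1/2) ≤ Real.log (1 - 1 / φ) :=
      Real.log_le_log (by norm_num) hnum
    have hl3 : Real.log (1/2) = - Real.log 2 := by rw [one_div, Real.log_inv]
    have hlogε : Real.log ε ≤ 0 := Real.log_nonpos (le_of_lt hε0) hε1
    have hγφ : 2 * γ ≤ γ * φ := by nlinarith
    linarith

/-- The scalar equation whose root gives the SNE. -/
noncomputable def auxG (aH aL γH γL s : ℝ) : ℝ :=
  1 / auxφ γH (aH - s) + 1 / auxφ γL (aL - s) - 1 - Real.exp (-s)

lemma auxG_strictMono {aH aL γH γL : ℝ} (hγH : 0 < γH) (hγL : 0 < γL) :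
    StrictMono (auxG aH aL γH γL) := by
  intro s t hst
  have h1 : auxφ γH (aH - t) < auxφ γH (aH - s) :=
    auxφ_strictMono hγH (by linarith)
  have h2 : auxφ γL (aL - t) < auxφ γL (aL - s) :=
    auxφ_strictMono hγL (by linarith)
  have p1 : (0:ℝ) < auxφ γH (aH - t) := lt_trans one_pos (auxφ_gt hγH _)
  have p2 : (0:ℝ) < auxφ γL (aL - t) := lt_trans one_pos (auxφ_gt hγL _)
  have i1 : 1 / auxφ γH (aH - s) < 1 / auxφ γH (aH - t) :=
    one_div_lt_one_div_of_lt p1 h1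
  have i2 : 1 / auxφ γL (aL - s) < 1 / auxφ γL (aL - t) :=
    one_div_lt_one_div_of_lt p2 h2
  have i3 : Real.exp (-t) < Real.exp (-s) := Real.exp_lt_exp.mpr (by linarith)
  unfold auxG; linarith

lemma auxG_continuous {aH aL γH γL : ℝ} (hγH : 0 < γH) (hγL : 0 < γL) :
    Continuous (auxG aH aL γH γL) := by
  unfold auxG
  have c1 : Continuous fun s => auxφ γH (aH - s) :=
    (auxφ_continuous hγH).comp (continuous_const.sub continuous_id)
  have c2 : Continuous fun s => auxφ γL (aL - s) :=
    (auxφ_continuous hγL).comp (continuous_const.sub continuous_id)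
  have n1 : ∀ s, auxφ γH (aH - s) ≠ 0 := fun s =>
    ne_of_gt (lt_trans one_pos (auxφ_gt hγH _))
  have n2 : ∀ s, auxφ γL (aL - s) ≠ 0 := fun s =>
    ne_of_gt (lt_trans one_pos (auxφ_gt hγL _))
  exact (((continuous_const.div c1 n1).add (continuous_const.div c2 n2)).sub
    continuous_const).sub (Real.continuous_exp.comp continuous_neg)

lemma auxG_exists_root {aH aL γH γL : ℝ} (hγH : 0 < γH) (hγL : 0 < γL) :
    ∃ s, auxG aH aL γH γL s = 0 := by
  set s1 : ℝ := max (max aH aL) 0 + 2 + Real.log 4 with hs1def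
  have hlog4 : 0 < Real.log 4 := Real.log_pos (by norm_num)
  have hs1pos : 0 ≤ s1 := by
    have : (0:ℝ) ≤ max (max aH aL) 0 := le_max_right _ _
    linarith
  have hG0 : auxG aH aL γH γL 0 ≤ 0 := by
    have h1 : 1 < auxφ γH (aH - 0) := auxφ_gt hγH _
    have h2 : 1 < auxφ γL (aL - 0) := auxφ_gt hγL _
    have i1 : 1 / auxφ γH (aH - 0) < 1 := by
      rw [div_lt_one (by linarith)]; exact h1
    have i2 : 1 / auxφ γL (aL - 0) < 1 := by
      rw [div_lt_one (by linarith)]; exact h2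
    have : Real.exp (-(0:ℝ)) = 1 := by norm_num
    unfold auxG; rw [this]; linarith
  have hGs1 : 0 ≤ auxG aH aL γH γL s1 := by
    have hlogq : Real.log (1/4 : ℝ) = - Real.log 4 := by
      rw [one_div, Real.log_inv]
    have hbH : aH - s1 ≤ γH - 1 + Real.log (1/4 : ℝ) := by
      rw [hlogq]
      have : aH ≤ max (max aH aL) 0 := le_trans (le_max_left _ _) (le_max_left _ _)
      simp only [hs1def]; linarith
    have hbL : aL - s1 ≤ γL - 1 + Real.log (1/4 : ℝ) := by
      rw [hlogq]
      have : aL ≤ max (max aH aL) 0 := le_trans (le_max_right _ _) (le_max_left _ _)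
      simp only [hs1def]; linarith
    have hφH : auxφ γH (aH - s1) ≤ 1 + 1/4 := auxφ_le hγH (by norm_num) (by norm_num) hbH
    have hφL : auxφ γL (aL - s1) ≤ 1 + 1/4 := auxφ_le hγL (by norm_num) (by norm_num) hbL
    have pH : (0:ℝ) < auxφ γH (aH - s1) := lt_trans one_pos (auxφ_gt hγH _)
    have pL : (0:ℝ) < auxφ γL (aL - s1) := lt_trans one_pos (auxφ_gt hγL _)
    have iH : (4:ℝ)/5 ≤ 1 / auxφ γH (aH - s1) := by
      rw [le_div_iff₀ pH]; linarith
    have iL : (4:ℝ)/5 ≤ 1 / auxφ γL (aL - s1) := by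
      rw [le_div_iff₀ pL]; linarith
    have hexp : Real.exp (-s1) ≤ 1/4 := by
      have h1 : Real.exp (-s1) ≤ Real.exp (- Real.log 4) := by
        apply Real.exp_le_exp.mpr
        have : Real.log 4 ≤ s1 := by
          have : (0:ℝ) ≤ max (max aH aL) 0 := le_max_right _ _
          simp only [hs1def]; linarith
        linarith
      have h2 : Real.exp (- Real.log 4) = 1/4 := by
        rw [Real.exp_neg, Real.exp_log (by norm_num)]; norm_num
      linarith
    unfold auxG; linarith
  have hcont := (auxG_continuous (aH := aH) (aL := aL) hγH hγL).continuousOn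
    (s := Set.Icc 0 s1)
  obtain ⟨s, _, hs⟩ := intermediate_value_Icc hs1pos hcont ⟨hG0, hGs1⟩
  exact ⟨s, hs⟩

lemma grh_eval (aH aL bH bL cH cL p1 p2 : ℝ) :
    GrH aH aL bH bL cH cL (p1, p2) (p1, p2) =
      1 / ((bH + cH) * p1) + Real.exp (aH - bH * p1) /
        (1 + Real.exp (aH - bH * p1) + Real.exp (aL - bL * p2)) - 1 := by
  simp [GrH, demH, util, sub_self, mul_zero, add_zero]

lemma grl_eval (aH aL bH bL cH cL p1 p2 : ℝ) :
    GrL aH aL bH bL cH cL (p1, p2) (p1, p2) =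
      1 / ((bL + cL) * p2) + Real.exp (aL - bL * p2) /
        (1 + Real.exp (aH - bH * p1) + Real.exp (aL - bL * p2)) - 1 := by
  simp [GrL, demL, util, sub_self, mul_zero, add_zero]

lemma aux_SNE_construct (aH aL bH bL cH cL s : ℝ)
    (hbH : 0 < bH) (hbL : 0 < bL) (hcH : 0 < cH) (hcL : 0 < cL)
    (hG : auxG aH aL (bH / (bH + cH)) (bL / (bL + cL)) s = 0) :
    IsSNE aH aL bH bL cH cL
      (auxφ (bH / (bH + cH)) (aH - s) / (bH + cH),
       auxφ (bL / (bL + cL)) (aL - s) / (bL + cL)) := by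
  have hβH : 0 < bH + cH := by linarith
  have hβL : 0 < bL + cL := by linarith
  have hγH : 0 < bH / (bH + cH) := div_pos hbH hβH
  have hγL : 0 < bL / (bL + cL) := div_pos hbL hβL
  set xH := auxφ (bH / (bH + cH)) (aH - s) with hxHdef
  set xL := auxφ (bL / (bL + cL)) (aL - s) with hxLdef
  have hxH1 : 1 < xH := auxφ_gt hγH _
  have hxL1 : 1 < xL := auxφ_gt hγL _
  have hxH0 : 0 < xH := lt_trans one_pos hxH1
  have hxL0 : 0 < xL := lt_trans one_pos hxL1
  have h1mH : 0 < 1 - 1 / xH := by rw [sub_pos, div_lt_one hxH0]; exact hxH1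
  have h1mL : 0 < 1 - 1 / xL := by rw [sub_pos, div_lt_one hxL0]; exact hxL1
  have hfH : bH / (bH + cH) * xH + Real.log (1 - 1 / xH) = aH - s := auxf_auxφ hγH _
  have hfL : bL / (bL + cL) * xL + Real.log (1 - 1 / xL) = aL - s := auxf_auxφ hγL _
  have hG2 : 1 / xH + 1 / xL - 1 - Real.exp (-s) = 0 := hG
  have hbHx : bH * (xH / (bH + cH)) = bH / (bH + cH) * xH := by ring
  have hbLx : bL * (xL / (bL + cL)) = bL / (bL + cL) * xL := by ring
  have e1 : aH - bH * (xH / (bH + cH)) = s + Real.log (1 - 1 / xH) := by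
    rw [hbHx]; linarith
  have e2 : aL - bL * (xL / (bL + cL)) = s + Real.log (1 - 1 / xL) := by
    rw [hbLx]; linarith
  have heH : Real.exp (aH - bH * (xH / (bH + cH))) = Real.exp s * (1 - 1 / xH) := by
    rw [e1, Real.exp_add, Real.exp_log h1mH]
  have heL : Real.exp (aL - bL * (xL / (bL + cL))) = Real.exp s * (1 - 1 / xL) := by
    rw [e2, Real.exp_add, Real.exp_log h1mL]
  have hexpinv : Real.exp s * Real.exp (-s) = 1 := by
    rw [← Real.exp_add]; simp
  have hDen : 1 + Real.exp (aH - bH * (xH / (bH + cH)))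
      + Real.exp (aL - bL * (xL / (bL + cL))) = Real.exp s := by
    rw [heH, heL]
    linear_combination (-Real.exp s) * hG2 - hexpinv
  have hcanH : (bH + cH) * (xH / (bH + cH)) = xH := by field_simp
  have hcanL : (bL + cL) * (xL / (bL + cL)) = xL := by field_simp
  refine ⟨by positivity, by positivity, ?_, ?_⟩
  · rw [grh_eval, hDen, hcanH, heH,
      mul_div_cancel_left₀ _ (Real.exp_ne_zero s)]
    field_simp; ring
  · rw [grl_eval, hDen, hcanL, heL,
      mul_div_cancel_left₀ _ (Real.exp_ne_zero s)]
    field_simp; ring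

lemma aux_SNE_rep (aH aL bH bL cH cL : ℝ) (q : ℝ × ℝ)
    (hbH : 0 < bH) (hbL : 0 < bL) (hcH : 0 < cH) (hcL : 0 < cL)
    (hq : IsSNE aH aL bH bL cH cL q) :
    ∃ s, auxG aH aL (bH / (bH + cH)) (bL / (bL + cL)) s = 0 ∧
      q.1 = auxφ (bH / (bH + cH)) (aH - s) / (bH + cH) ∧
      q.2 = auxφ (bL / (bL + cL)) (aL - s) / (bL + cL) := by
  have hβH : 0 < bH + cH := by linarith
  have hβL : 0 < bL + cL := by linarith
  have hγH : 0 < bH / (bH + cH) := div_pos hbH hβH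
  have hγL : 0 < bL / (bL + cL) := div_pos hbL hβL
  obtain ⟨hq1, hq2, hGrH, hGrL⟩ := hq
  rw [show q = (q.1, q.2) from rfl, grh_eval] at hGrH
  rw [show q = (q.1, q.2) from rfl, grl_eval] at hGrL
  set eH := Real.exp (aH - bH * q.1) with heHdef
  set eL := Real.exp (aL - bL * q.2) with heLdef
  have heH0 : 0 < eH := Real.exp_pos _
  have heL0 : 0 < eL := Real.exp_pos _
  set D := 1 + eH + eL with hDdef
  have hD1 : 1 < D := by simp only [hDdef]; linarith
  have hD0 : 0 < D := by linarith
  set s := Real.log D with hsdef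
  have hDs : Real.exp s = D := Real.exp_log hD0
  set xH := (bH + cH) * q.1 with hxHdef
  set xL := (bL + cL) * q.2 with hxLdef
  have hxH0 : 0 < xH := mul_pos hβH hq1
  have hxL0 : 0 < xL := mul_pos hβL hq2
  -- from GrH = 0 : 1/xH = (1 + eL)/D
  have h1H : 1 / xH = (1 + eL) / D := by
    have h' : 1 / xH + eH / D - 1 = 0 := hGrH
    field_simp at h' ⊢
    linear_combination h' + xH * hDdef
  have h1L : 1 / xL = (1 + eH) / D := by
    have h' : 1 / xL + eL / D - 1 = 0 := hGrL
    field_simp at h' ⊢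
    linear_combination h' + xL * hDdef
  have hxH1 : 1 < xH := by
    have hlt : 1 / xH < 1 := by
      rw [h1H, div_lt_one hD0]; simp only [hDdef]; linarith
    rw [div_lt_one hxH0] at hlt; exact hlt
  have hxL1 : 1 < xL := by
    have hlt : 1 / xL < 1 := by
      rw [h1L, div_lt_one hD0]; simp only [hDdef]; linarith
    rw [div_lt_one hxL0] at hlt; exact hlt
  have h1mH : 1 - 1 / xH = eH / D := by
    linear_combination -hGrH
  have h1mL : 1 - 1 / xL = eL / D := by
    linear_combination -hGrL
  have hlogH : Real.log (1 - 1 / xH) = aH - bH * q.1 - s := by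
    rw [h1mH, Real.log_div (ne_of_gt heH0) (ne_of_gt hD0), heHdef, Real.log_exp, hsdef]
  have hlogL : Real.log (1 - 1 / xL) = aL - bL * q.2 - s := by
    rw [h1mL, Real.log_div (ne_of_gt heL0) (ne_of_gt hD0), heLdef, Real.log_exp, hsdef]
  have hγxH : bH / (bH + cH) * xH = bH * q.1 := by
    rw [hxHdef]; field_simp
  have hγxL : bL / (bL + cL) * xL = bL * q.2 := by
    rw [hxLdef]; field_simp
  have hfH : auxf (bH / (bH + cH)) xH = aH - s := by
    unfold auxf; rw [hlogH, hγxH]; ring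
  have hfL : auxf (bL / (bL + cL)) xL = aL - s := by
    unfold auxf; rw [hlogL, hγxL]; ring
  have hrepH : auxφ (bH / (bH + cH)) (aH - s) = xH := auxφ_eq hγH hxH1 hfH
  have hrepL : auxφ (bL / (bL + cL)) (aL - s) = xL := auxφ_eq hγL hxL1 hfL
  refine ⟨s, ?_, ?_, ?_⟩
  · unfold auxG
    rw [hrepH, hrepL, h1H, h1L, Real.exp_neg, hDs]
    rw [show ((1:ℝ) + eL) / D + (1 + eH) / D - 1 - D⁻¹ = (1 + eH + eL) / D - 1 by ring,
      ← hDdef, div_self (ne_of_gt hD0)]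
    ring
  · rw [hrepH, hxHdef]; field_simp
  · rw [hrepL, hxLdef]; field_simp

theorem unique_SNE (aH aL bH bL cH cL : ℝ)
    (hbH : 0 < bH) (hbL : 0 < bL) (hcH : 0 < cH) (hcL : 0 < cL) :
    ∃! p : ℝ × ℝ, IsSNE aH aL bH bL cH cL p := by
  have hβH : 0 < bH + cH := by linarith
  have hβL : 0 < bL + cL := by linarith
  have hγH : 0 < bH / (bH + cH) := div_pos hbH hβH
  have hγL : 0 < bL / (bL + cL) := div_pos hbL hβL
  obtain ⟨s, hs⟩ := auxG_exists_root (aH := aH) (aL := aL) hγH hγL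
  refine ⟨(auxφ (bH / (bH + cH)) (aH - s) / (bH + cH),
      auxφ (bL / (bL + cL)) (aL - s) / (bL + cL)),
    aux_SNE_construct aH aL bH bL cH cL s hbH hbL hcH hcL hs, ?_⟩
  intro q hq
  obtain ⟨s', hs', h1, h2⟩ := aux_SNE_rep aH aL bH bL cH cL q hbH hbL hcH hcL hq
  have hss : s' = s :=
    (auxG_strictMono (aH := aH) (aL := aL) hγH hγL).injective (hs'.trans hs.symm)
  rw [hss] at h1 h2
  exact Prod.ext h1 h2
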